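/- Let T be cyclic of order e, Σ = ⟨σ⟩ cyclic of order f acting on T by σ·t = t^q with q a power of the prime p and q^f ≡ 1 (mod e), and G = T ⋊ Σ. If ρ is an irreducible representation of G over a field of characteristic p whose restriction to T is faithful, and r is the order of p modulo e, then r divides the degree of ρ times [F':F_p] for the field of definition F' of ρ; in particular if ρ is defined over F_p then r divides deg(ρ). -/

import Mathlib

open Polynomial Matrix IntermediateField

lemma lemA (F : Type*) [Field F] [Fintype F] (K : Type*) [Field K] [Algebra F K]
    (e : ℕ) (he : 0 < e) (hco : Nat.Coprime (Fintype.card F) e)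
    (lam : K) (hlam : IsPrimitiveRoot lam e) :
    (minpoly F lam).natDegree = orderOf ((Fintype.card F : ZMod e)) := by
  classical
  haveI : NeZero e := ⟨he.ne'⟩
  set c := Fintype.card F with hc
  set s := orderOf ((c : ZMod e)) with hs
  have hc2 : 1 < c := Fintype.one_lt_card
  have hlame : lam ^ e = 1 := hlam.pow_eq_one
  have hint : IsIntegral F lam := by
    refine ⟨X ^ e - C 1, monic_X_pow_sub_C (1 : F) he.ne', ?_⟩
    simp [hlame]
  set k := (minpoly F lam).natDegree with hk
  have hkpos : 0 < k := minpoly.natDegree_pos hint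
  haveI : FiniteDimensional F F⟮lam⟯ := IntermediateField.adjoin.finiteDimensional hint
  have hfr : Module.finrank F F⟮lam⟯ = k := IntermediateField.adjoin.finrank hint
  haveI : Finite F⟮lam⟯ := Module.finite_of_finite F
  haveI : Fintype F⟮lam⟯ := Fintype.ofFinite _
  have hcardL : Fintype.card F⟮lam⟯ = c ^ k := by
    rw [Module.card_eq_pow_finrank (K := F) (V := F⟮lam⟯), hfr]
  -- s positive
  have hu : ((ZMod.unitOfCoprime c hco : (ZMod e)ˣ) : ZMod e) = (c : ZMod e) := rfl
  have hspos : 0 < s := by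
    rw [hs, ← hu, orderOf_units]
    exact orderOf_pos _
  have hlamne : lam ≠ 0 := hlam.ne_zero he.ne'
  -- step 1 : s ∣ k
  have hckpos : 0 < c ^ k := pow_pos (by omega) k
  have h1 : lam ^ c ^ k = lam := by
    have := FiniteField.pow_card (IntermediateField.AdjoinSimple.gen F lam)
    rw [hcardL] at this
    have := congrArg (algebraMap F⟮lam⟯ K) this
    simpa using this
  have hdvd1 : e ∣ c ^ k - 1 := by
    rw [← hlam.pow_eq_one_iff_dvd]
    have : lam ^ (c ^ k - 1) * lam = 1 * lam := by
      rw [one_mul, ← pow_succ, Nat.sub_add_cancel hckpos, h1]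
    exact mul_right_cancel₀ hlamne this
  have hsdk : s ∣ k := by
    apply orderOf_dvd_of_pow_eq_one
    have : ((c ^ k : ℕ) : ZMod e) = 1 := by
      rw [← Nat.sub_add_cancel hckpos, Nat.cast_add, Nat.cast_one,
        (ZMod.natCast_eq_zero_iff _ e).mpr hdvd1, zero_add]
    rw [← Nat.cast_pow, this]
  -- step 2 : k ≤ s
  have hcspos : 0 < c ^ s := pow_pos (by omega) s
  have hdvd2 : e ∣ c ^ s - 1 := by
    rw [← ZMod.natCast_eq_zero_iff]
    have h2 : ((c : ZMod e)) ^ s = 1 := pow_orderOf_eq_one _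
    have : ((c ^ s - 1 : ℕ) : ZMod e) = ((c ^ s : ℕ) : ZMod e) - 1 := by
      rw [Nat.cast_sub hcspos, Nat.cast_one]
    rw [this, Nat.cast_pow, h2, sub_self]
  have hfix : lam ^ c ^ s = lam := by
    rw [← Nat.sub_add_cancel hcspos, pow_succ, (hlam.pow_eq_one_iff_dvd _).mpr hdvd2, one_mul]
  -- characteristic
  set p := ringChar F with hpdef
  haveI : CharP F p := ringChar.charP F
  have hp : p.Prime := CharP.char_is_prime F p
  haveI : Fact p.Prime := ⟨hp⟩
  obtain ⟨w, -, hcard⟩ := FiniteField.card F p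
  haveI : CharP K p := charP_of_injective_algebraMap (algebraMap F K).injective p
  haveI : ExpChar K p := .prime hp
  have hpc : p ^ ((w : ℕ) * s) = c ^ s := by rw [pow_mul, ← hcard]
  let ψ : K →ₐ[F] K :=
    { toRingHom := iterateFrobenius K p ((w : ℕ) * s)
      commutes' := fun x => by
        rw [RingHom.toMonoidHom_eq_coe, OneHom.toFun_eq_coe, MonoidHom.toOneHom_coe,
          MonoidHom.coe_coe, iterateFrobenius_def, ← map_pow, hpc,
          FiniteField.pow_card_pow] }
  have hψ : ∀ x : K, ψ x = x ^ c ^ s := fun x => by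
    show iterateFrobenius K p ((w : ℕ) * s) x = _
    rw [iterateFrobenius_def, hpc]
  have hlamE : lam ∈ AlgHom.equalizer ψ (AlgHom.id F K) := by
    rw [AlgHom.mem_equalizer, hψ, hfix]; rfl
  have hadj : Algebra.adjoin F {lam} ≤ AlgHom.equalizer ψ (AlgHom.id F K) :=
    Algebra.adjoin_le (by simpa using hlamE)
  have key : ∀ x : F⟮lam⟯, (x : K) ^ c ^ s = (x : K) := by
    intro x
    have hx : (x : K) ∈ F⟮lam⟯.toSubalgebra := x.2
    rw [IntermediateField.adjoin_simple_toSubalgebra_of_isAlgebraic hint.isAlgebraic] at hx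
    have := hadj hx
    rw [AlgHom.mem_equalizer, hψ] at this
    simpa using this
  -- count roots
  set P : K[X] := X ^ (c ^ s) - X with hP
  have hPne : P ≠ 0 := FiniteField.X_pow_card_sub_X_ne_zero K (by
    calc 1 < c := hc2
    _ ≤ c ^ s := Nat.le_self_pow hspos.ne' c)
  have hPdeg : P.natDegree = c ^ s := by
    have h2 : 1 < c ^ s := lt_of_lt_of_le hc2 (Nat.le_self_pow hspos.ne' c)
    rw [hP, natDegree_sub_eq_left_of_natDegree_lt, natDegree_X_pow]
    rw [natDegree_X_pow, natDegree_X]; omega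
  have hinj : Function.Injective
      (fun x : F⟮lam⟯ => (⟨(x : K), by
        rw [Multiset.mem_toFinset, mem_roots hPne]
        simp [P, IsRoot, key x]⟩ : P.roots.toFinset)) := by
    intro x y hxy
    have := congrArg Subtype.val hxy
    exact Subtype.ext (by simpa using this)
  have hcardle : Fintype.card F⟮lam⟯ ≤ P.roots.toFinset.card := by
    have := Fintype.card_le_of_injective _ hinj
    simpa using this
  have hroots : P.roots.toFinset.card ≤ c ^ s := by
    calc P.roots.toFinset.card ≤ Multiset.card P.roots := Multiset.toFinset_card_le _
    _ ≤ P.natDegree := P.card_roots' 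
    _ = c ^ s := hPdeg
  have hks : k ≤ s := by
    have : c ^ k ≤ c ^ s := by omega
    exact (Nat.pow_le_pow_iff_right hc2).mp this
  exact le_antisymm hks (Nat.le_of_dvd hkpos hsdk) |>.symm ▸ rfl

lemma lemB (F : Type*) [Field F] [Fintype F] (e : ℕ) (he : 0 < e)
    (hco : Nat.Coprime (Fintype.card F) e)
    (P : Polynomial F) (hm : P.Monic)
    (hroots : ∀ lam : AlgebraicClosure F, Polynomial.aeval lam P = 0 → IsPrimitiveRoot lam e) :
    orderOf ((Fintype.card F : ZMod e)) ∣ P.natDegree := by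
  haveI : NeZero e := ⟨he.ne'⟩
  set s := orderOf ((Fintype.card F : ZMod e)) with hs
  have hu : ((ZMod.unitOfCoprime _ hco : (ZMod e)ˣ) : ZMod e) = ((Fintype.card F : ZMod e)) := rfl
  have hspos : 0 < s := by
    rw [hs, ← hu, orderOf_units]; exact orderOf_pos _
  suffices H : ∀ n (P : Polynomial F), P.Monic →
      (∀ lam : AlgebraicClosure F, Polynomial.aeval lam P = 0 → IsPrimitiveRoot lam e) →
      P.natDegree = n → s ∣ n from H _ P hm hroots rfl
  intro n
  induction n using Nat.strong_induction_on with
  | _ n ih =>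
    intro P hm hroots hdeg
    rcases Nat.eq_zero_or_pos n with h0 | h0
    · simp [h0]
    have hnu : ¬ IsUnit P := fun hu' =>
      h0.ne' (hdeg ▸ natDegree_eq_zero_of_isUnit hu')
    obtain ⟨g, hgm, hgi, hgd⟩ := P.exists_monic_irreducible_factor hnu
    have hgdeg : g.degree ≠ 0 := by
      have := hgi.natDegree_pos
      simpa [degree_eq_natDegree hgm.ne_zero] using by exact_mod_cast this.ne'
    obtain ⟨lam, hlamroot⟩ := IsAlgClosed.exists_aeval_eq_zero (AlgebraicClosure F) g hgdeg
    obtain ⟨h, rfl⟩ := hgd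
    have hlamP : Polynomial.aeval lam (g * h) = 0 := by
      rw [_root_.map_mul, hlamroot, zero_mul]
    have hprim := hroots lam hlamP
    have hgmin : g = minpoly F lam :=
      (minpoly.eq_of_irreducible_of_monic hgi hlamroot hgm)
    have hgdeg' : g.natDegree = s := by
      rw [hgmin]; exact lemA F (AlgebraicClosure F) e he hco lam hprim
    have hh : h.Monic := hgm.of_mul_monic_left hm
    have hmul : g.natDegree + h.natDegree = n := by
      rw [← hdeg, natDegree_mul hgm.ne_zero hh.ne_zero]
    have hih : s ∣ h.natDegree := by
      refine ih h.natDegree (by omega) h hh ?_ rfl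
      intro mu hmu
      exact hroots mu (by rw [_root_.map_mul, hmu, mul_zero])
    rw [← hmul, hgdeg']
    exact dvd_add dvd_rfl hih

lemma eval_charpoly' {K : Type*} [Field K] {n : ℕ} (lam : K) (A : Matrix (Fin n) (Fin n) K) :
    (A.charpoly).eval lam = (lam • (1 : Matrix (Fin n) (Fin n) K) - A).det := by
  rw [Matrix.charpoly, ← Polynomial.coe_evalRingHom, RingHom.map_det]
  congr 1
  ext i j
  by_cases h : i = j <;>
    simp [charmatrix_apply, h, Matrix.one_apply, Matrix.smul_apply, Matrix.diagonal_apply]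

lemma lemC (F : Type*) [Field F] [Fintype F] (e : ℕ) (he : 0 < e)
    (hco : Nat.Coprime (Fintype.card F) e)
    (V : Type*) [AddCommGroup V] [Module F V] [FiniteDimensional F V]
    (α : V →ₗ[F] V) (h1 : α ^ e = 1)
    (h2 : ∀ m : ℕ, m ∣ e → m ≠ e → Function.Injective (α ^ m - 1 : V →ₗ[F] V)) :
    orderOf ((Fintype.card F : ZMod e)) ∣ Module.finrank F V := by
  classical
  set n := Module.finrank F V with hn
  set b := Module.finBasis F V with hb
  set K := AlgebraicClosure F with hK
  set M := LinearMap.toMatrixAlgEquiv b α with hM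
  set A := (algebraMap F K).mapMatrix M with hA
  have hAe : A ^ e = 1 := by
    rw [hA, ← map_pow, hM, ← map_pow, h1, _root_.map_one, _root_.map_one]
  -- main root fact
  have hroots : ∀ lam : K, Polynomial.aeval lam M.charpoly = 0 → IsPrimitiveRoot lam e := by
    intro lam hlam
    -- lam is an eigenvalue of A
    have hdet : (lam • (1 : Matrix (Fin n) (Fin n) K) - A).det = 0 := by
      have h' : ((M.map (algebraMap F K)).charpoly).eval lam = 0 := by
        rw [Matrix.charpoly_map, eval_map, ← aeval_def]; exact hlam
      rw [← eval_charpoly' lam A]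
      rw [hA, RingHom.mapMatrix_apply]
      exact h'
    obtain ⟨v, hv0, hv⟩ := (Matrix.exists_mulVec_eq_zero_iff).mpr hdet
    have hAv : A.mulVec v = lam • v := by
      have := hv
      rw [Matrix.sub_mulVec, sub_eq_zero] at this
      rw [← this, Matrix.smul_mulVec, Matrix.one_mulVec]
    have hpow : ∀ j : ℕ, (A ^ j).mulVec v = lam ^ j • v := by
      intro j
      induction j with
      | zero => simp [Matrix.one_mulVec]
      | succ j ih =>
        rw [pow_succ', pow_succ', ← Matrix.mulVec_mulVec, ih, Matrix.mulVec_smul, hAv,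
          smul_smul, mul_comm lam (lam ^ j)]
    have hlame : lam ^ e = 1 := by
      have := hpow e
      rw [hAe, Matrix.one_mulVec] at this
      by_contra hne
      have : (lam ^ e - 1) • v = 0 := by rw [sub_smul, ← this, one_smul, sub_self]
      rcases smul_eq_zero.mp this with h | h
      · exact hne (by linear_combination h)
      · exact hv0 h
    have hfin : IsOfFinOrder lam := isOfFinOrder_iff_pow_eq_one.mpr ⟨e, he, hlame⟩
    have hdvd : orderOf lam ∣ e := orderOf_dvd_of_pow_eq_one hlame
    have horder : orderOf lam = e := by
      by_contra hne
      set m := orderOf lam with hm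
      have hinj := h2 m hdvd hne
      -- β is invertible
      have hbij : Function.Bijective (α ^ m - 1 : V →ₗ[F] V) :=
        ⟨hinj, (LinearMap.injective_iff_surjective).mp hinj⟩
      have hunit : IsUnit (α ^ m - 1 : V →ₗ[F] V) := by
        exact (LinearMap.isUnit_iff_ker_eq_bot _).mpr (LinearMap.ker_eq_bot.mpr hinj)
      have hunitM : IsUnit (LinearMap.toMatrixAlgEquiv b (α ^ m - 1 : V →ₗ[F] V)) :=
        hunit.map _
      have hdetM : (LinearMap.toMatrixAlgEquiv b (α ^ m - 1 : V →ₗ[F] V)).det ≠ 0 := by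
        intro h0
        have := (Matrix.isUnit_iff_isUnit_det _).mp hunitM
        rw [h0] at this
        exact (not_isUnit_zero this)
      have hMm : LinearMap.toMatrixAlgEquiv b (α ^ m - 1 : V →ₗ[F] V) = M ^ m - 1 := by
        rw [map_sub, map_pow, _root_.map_one]
      have hdetA : (A ^ m - 1).det ≠ 0 := by
        have : A ^ m - 1 = (algebraMap F K).mapMatrix (M ^ m - 1) := by
          rw [map_sub, map_pow, _root_.map_one]
        rw [this, ← RingHom.map_det, ← hMm]
        intro h0
        exact hdetM ((map_eq_zero_iff (algebraMap F K) (algebraMap F K).injective).mp h0)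
      have : (A ^ m - 1).mulVec v = 0 := by
        rw [Matrix.sub_mulVec, hpow, pow_orderOf_eq_one, one_smul, Matrix.one_mulVec, sub_self]
      exact hdetA ((Matrix.exists_mulVec_eq_zero_iff).mp ⟨v, hv0, this⟩)
    have := IsPrimitiveRoot.orderOf lam
    rwa [horder] at this
  have := lemB F e he hco M.charpoly M.charpoly_monic hroots
  rwa [Matrix.charpoly_natDegree_eq_dim, Fintype.card_fin] at this

/-- Let `T` be cyclic of order `e`, `Σ = ⟨σ⟩` cyclic of order `f` acting
on `T` by `σ·t = t^q` with `q` a power of the prime `p` and `q^f ≡ 1 (mod e)`, and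
`G = T ⋊ Σ`.  If `ρ` is an irreducible representation of `G` over a field `F'` of
characteristic `p` whose restriction to `T` is faithful, and `r` is the order of `p`
modulo `e`, then `r` divides `deg(ρ) · [F' : F_p]`; in particular if `F' = F_p` then
`r ∣ deg ρ`. -/
theorem stmt17 (p a q e f : ℕ) (hp : p.Prime) (hq : q = p ^ a)
    (hqf : e ∣ q ^ f - 1) (hf : 1 ≤ f) (hco : Nat.Coprime e p)
    (T S : Type) [Group T] [Fintype T] [Group S] [Fintype S]
    (hT : IsCyclic T) (hTe : Fintype.card T = e)
    (σ : S) (hσ : ∀ x : S, x ∈ Subgroup.zpowers σ) (hSf : Fintype.card S = f)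
    (φ : S →* MulAut T) (hφ : ∀ t : T, φ σ t = t ^ q)
    (F' : Type) [Field F'] [Fintype F'] [CharP F' p] [Algebra (ZMod p) F']
    (V : Type) [AddCommGroup V] [Module F' V] [FiniteDimensional F' V]
    (ρ : Representation F' (T ⋊[φ] S) V)
    (hirr : IsSimpleModule (MonoidAlgebra F' (T ⋊[φ] S)) ρ.asModule)
    -- `ρ` restricted to `T` is faithful:
    (hfaith : ∀ t : T, ρ (SemidirectProduct.inl t) = 1 → t = 1)
    (r : ℕ) (hr : r = orderOf ((p : ZMod e))) :
    r ∣ Module.finrank F' V * Module.finrank (ZMod p) F' ∧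
    (Module.finrank (ZMod p) F' = 1 → r ∣ Module.finrank F' V) := by
  classical
  have he : 0 < e := hTe ▸ Fintype.card_pos
  haveI : NeZero e := ⟨he.ne'⟩
  haveI : Fact p.Prime := ⟨hp⟩
  obtain ⟨t₀, ht₀⟩ := hT.exists_generator
  have hord : orderOf t₀ = e := by
    rw [orderOf_eq_card_of_forall_mem_zpowers ht₀, Nat.card_eq_fintype_card, hTe]
  set α : V →ₗ[F'] V := ρ (SemidirectProduct.inl t₀) with hα
  have hαpow : ∀ j : ℕ, α ^ j = ρ (SemidirectProduct.inl (t₀ ^ j)) := fun j => by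
    rw [map_pow, map_pow]
  have h1 : α ^ e = 1 := by
    rw [hαpow, ← hord, pow_orderOf_eq_one, _root_.map_one, _root_.map_one]
  -- T is commutative
  have hcomm : ∀ x y : T, x * y = y * x := by
    intro x y
    obtain ⟨i, hi⟩ := ht₀ x
    obtain ⟨j, hj⟩ := ht₀ y
    simp only at hi hj
    rw [← hi, ← hj, ← _root_.zpow_add, ← _root_.zpow_add, add_comm]
  -- natural powers of σ
  have hσn : ∀ x : S, ∃ k : ℕ, σ ^ k = x := fun x => by
    have hx := mem_powers_iff_mem_zpowers.mpr (hσ x)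
    exact (Submonoid.mem_powers_iff x σ).mp hx
  -- action of powers of σ on t₀
  have hφk : ∀ k : ℕ, φ (σ ^ k) t₀ = t₀ ^ q ^ k := by
    intro k
    induction k with
    | zero => simp
    | succ k ih =>
      rw [pow_succ, _root_.map_mul, MulAut.mul_apply, hφ, map_pow, ih, ← pow_mul, ← pow_succ]
  -- conjugation of inl t₀
  have hconj : ∀ g : T ⋊[φ] S, ∃ j : ℕ,
      g⁻¹ * SemidirectProduct.inl t₀ * g = SemidirectProduct.inl (t₀ ^ q ^ j) := by
    intro g
    obtain ⟨k, hk⟩ := hσn g.right⁻¹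
    refine ⟨k, ?_⟩
    have h3 : (SemidirectProduct.inl g.left : T ⋊[φ] S)⁻¹ * SemidirectProduct.inl t₀ *
        SemidirectProduct.inl g.left = SemidirectProduct.inl t₀ := by
      rw [← _root_.map_inv, ← _root_.map_mul, ← _root_.map_mul]
      congr 1
      rw [mul_assoc, hcomm t₀ g.left, ← mul_assoc, inv_mul_cancel, one_mul]
    have h4 : (SemidirectProduct.inr g.right : T ⋊[φ] S)⁻¹ * SemidirectProduct.inl t₀ *
        SemidirectProduct.inr g.right = SemidirectProduct.inl (φ g.right⁻¹ t₀) := by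
      rw [SemidirectProduct.inl_aut, ← _root_.map_inv, inv_inv]
    calc g⁻¹ * SemidirectProduct.inl t₀ * g
        = (SemidirectProduct.inr g.right : T ⋊[φ] S)⁻¹ *
          ((SemidirectProduct.inl g.left : T ⋊[φ] S)⁻¹ * SemidirectProduct.inl t₀ *
            SemidirectProduct.inl g.left) * SemidirectProduct.inr g.right := by
          conv_lhs => rw [← SemidirectProduct.inl_left_mul_inr_right g]
          group
      _ = SemidirectProduct.inl (φ g.right⁻¹ t₀) := by rw [h3, h4]
      _ = SemidirectProduct.inl (t₀ ^ q ^ k) := by rw [← hk, hφk]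
  -- injectivity of α^m - 1 for proper divisors m of e
  have hker : ∀ m : ℕ, m ∣ e → m ≠ e → Function.Injective (α ^ m - 1 : V →ₗ[F'] V) := by
    intro m hm hne
    -- stability of the kernel under the action of the group
    have hstab : ∀ (g : T ⋊[φ] S) (v : V), (α ^ m - 1) v = 0 → (α ^ m - 1) (ρ g v) = 0 := by
      intro g v hv
      have hv' : (α ^ m) v = v := by
        rw [LinearMap.sub_apply, Module.End.one_apply, sub_eq_zero] at hv
        exact hv
      obtain ⟨j, hj⟩ := hconj g
      have hiter : ∀ N : ℕ, ((α ^ m) ^ N) v = v := by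
        intro N
        induction N with
        | zero => simp
        | succ N ih => rw [pow_succ', Module.End.mul_apply, ih, hv']
      have hconjm : g⁻¹ * (SemidirectProduct.inl t₀) ^ m * g
          = (SemidirectProduct.inl (t₀ ^ q ^ j) : T ⋊[φ] S) ^ m := by
        have := congrArg (· ^ m) hj
        rw [← this]
        rw [show g⁻¹ * SemidirectProduct.inl t₀ * g
            = g⁻¹ * SemidirectProduct.inl t₀ * (g⁻¹)⁻¹ by rw [inv_inv], conj_pow, inv_inv]
      have hgm : (SemidirectProduct.inl t₀ : T ⋊[φ] S) ^ m * g
          = g * (SemidirectProduct.inl (t₀ ^ q ^ j) : T ⋊[φ] S) ^ m := by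
        rw [← hconjm, ← mul_assoc, ← mul_assoc, mul_inv_cancel, one_mul]
      have hend : α ^ m * ρ g = ρ g * (α ^ m) ^ q ^ j := by
        have e1 : α ^ m = ρ ((SemidirectProduct.inl t₀ : T ⋊[φ] S) ^ m) := by
          rw [map_pow]
        have e2 : ρ (SemidirectProduct.inl (t₀ ^ q ^ j) : T ⋊[φ] S) = α ^ q ^ j := by
          rw [hαpow]
        have h6 : ((α ^ m) ^ q ^ j : V →ₗ[F'] V) = (α ^ q ^ j) ^ m := by
          rw [← pow_mul, ← pow_mul, mul_comm]
        have h7 : ((α ^ q ^ j : V →ₗ[F'] V)) ^ m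
            = ρ ((SemidirectProduct.inl (t₀ ^ q ^ j) : T ⋊[φ] S) ^ m) := by
          rw [map_pow, hαpow]
        rw [h6, h7, e1, ← _root_.map_mul, ← _root_.map_mul, hgm]
      have : (α ^ m) (ρ g v) = ρ g v := by
        have := congrArg (fun ψ : V →ₗ[F'] V => ψ v) hend
        simp only [Module.End.mul_apply] at this
        rw [this, hiter]
      rw [LinearMap.sub_apply, Module.End.one_apply, this, sub_self]
    -- the kernel as a submodule over the monoid algebra
    let N : Submodule (MonoidAlgebra F' (T ⋊[φ] S)) ρ.asModule :=
      { carrier := {v : ρ.asModule | (α ^ m - 1) (ρ.asModuleEquiv v) = 0}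
        add_mem' := by
          intro x y hx hy
          simp only [Set.mem_setOf_eq, map_add] at hx hy ⊢
          rw [hx, hy, add_zero]
        zero_mem' := by simp
        smul_mem' := by
          intro c x hx
          simp only [Set.mem_setOf_eq] at hx ⊢
          rw [ρ.asModuleEquiv_map_smul]
          induction c using MonoidAlgebra.induction_on with
          | of g =>
            rw [ρ.asAlgebraHom_of]
            exact hstab g _ hx
          | add f g hf hg =>
            rw [map_add, LinearMap.add_apply, map_add, hf, hg, add_zero]
          | smul r f hf =>
            rw [_root_.map_smul, LinearMap.smul_apply, _root_.map_smul, hf, smul_zero] }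
    rcases eq_bot_or_eq_top N with hbot | htop
    · -- kernel is trivial, so injective
      rw [← LinearMap.ker_eq_bot]
      rw [LinearMap.ker_eq_bot']
      intro v hv
      have hmem : (ρ.asModuleEquiv.symm v) ∈ N := by
        show (α ^ m - 1) (ρ.asModuleEquiv (ρ.asModuleEquiv.symm v)) = 0
        rw [LinearEquiv.apply_symm_apply]
        exact hv
      rw [hbot, Submodule.mem_bot] at hmem
      have := congrArg ρ.asModuleEquiv hmem
      rw [LinearEquiv.apply_symm_apply, map_zero] at this
      exact this
    · -- otherwise α^m = 1, contradiction with faithfulness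
      exfalso
      have hall : ∀ v : V, (α ^ m - 1) v = 0 := by
        intro v
        have : (ρ.asModuleEquiv.symm v) ∈ N := htop ▸ Submodule.mem_top
        have h5 : (α ^ m - 1) (ρ.asModuleEquiv (ρ.asModuleEquiv.symm v)) = 0 := this
        rwa [LinearEquiv.apply_symm_apply] at h5
      have hαm : α ^ m = 1 := by
        ext v
        have := hall v
        rw [LinearMap.sub_apply, Module.End.one_apply, sub_eq_zero] at this
        simpa using this
      have : t₀ ^ m = 1 := hfaith _ (by rw [← hαpow, hαm])
      have hedvd : e ∣ m := hord ▸ orderOf_dvd_of_pow_eq_one this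
      rcases Nat.eq_zero_or_pos m with h0 | h0
      · rw [h0] at hm
        exact he.ne' (Nat.eq_zero_of_zero_dvd hm)
      · exact hne (Nat.dvd_antisymm hm hedvd)
  -- apply the linear algebra lemma
  set d := Module.finrank (ZMod p) F' with hd
  have hcard : Fintype.card F' = p ^ d := by
    rw [Module.card_eq_pow_finrank (K := ZMod p) (V := F'), ZMod.card]
  have hcopr : Nat.Coprime (Fintype.card F') e := by
    rw [hcard]
    exact (hco.symm).pow_left d
  have hs := lemC F' e he hcopr V α h1 hker
  -- identify the order
  have hcast : ((Fintype.card F' : ZMod e)) = (p : ZMod e) ^ d := by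
    rw [hcard]; push_cast; ring
  set u : (ZMod e)ˣ := ZMod.unitOfCoprime p hco.symm with hu
  have huval : ((u : (ZMod e)ˣ) : ZMod e) = (p : ZMod e) := rfl
  have hr' : r = orderOf u := by rw [hr, ← huval, orderOf_units]
  have hsval : orderOf ((Fintype.card F' : ZMod e)) = orderOf (u ^ d) := by
    rw [hcast, ← huval, ← Units.val_pow_eq_pow_val, orderOf_units]
  have hpow : orderOf (u ^ d) = r / Nat.gcd r d := by
    rw [orderOf_pow, ← hr']
  have hgd : Nat.gcd r d ∣ r := Nat.gcd_dvd_left r d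
  have hmul : (r / Nat.gcd r d) * Nat.gcd r d = r := Nat.div_mul_cancel hgd
  rw [hsval, hpow] at hs
  obtain ⟨n', hn'⟩ := hs
  obtain ⟨d', hd'⟩ := Nat.gcd_dvd_right r d
  constructor
  · refine ⟨n' * d', ?_⟩
    rw [hn']
    calc r / Nat.gcd r d * n' * d = r / Nat.gcd r d * n' * (Nat.gcd r d * d') := by rw [← hd']
      _ = (r / Nat.gcd r d * Nat.gcd r d) * (n' * d') := by ring
      _ = r * (n' * d') := by rw [hmul]
  · intro hd1
    rw [hd1] at hn'
    rw [Nat.gcd_one_right r, Nat.div_one] at hn'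
    exact ⟨n', hn'⟩
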